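/- Let G_1, …, G_ℓ be graphs on the same finite vertex set V, where G_i has m_i edges. Then there exists a bipartition of V into two classes A and B such that for every i = 1, …, ℓ the number of edges of G_i with one endvertex in A and the other in B is at least m_i/2 − √(ℓ·m_i/2). -/

import Mathlib

/-- `eBetween G A B` is the number of edges of `G` with one endvertex in `A`
and the other in `B`. -/
def eBetween {V : Type*} [Fintype V] [DecidableEq V] (G : SimpleGraph V)
    [DecidableRel G.Adj] (A B : Finset V) : ℕ :=
  (G.edgeFinset.filter fun e => ∃ a ∈ A, ∃ b ∈ B, e = s(a, b)).card

namespace SimulBipartAux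

open Finset

variable {V : Type*} [Fintype V] [DecidableEq V]

def crossB (χ : V → Bool) (e : Sym2 V) : Bool :=
  Sym2.lift ⟨fun a b => xor (χ a) (χ b), fun _ _ => Bool.xor_comm _ _⟩ e

@[simp] lemma crossB_mk (χ : V → Bool) (a b : V) :
    crossB χ s(a, b) = xor (χ a) (χ b) := rfl

def bflip (p : V) (χ : V → Bool) : V → Bool := Function.update χ p (!(χ p))

@[simp] lemma bflip_apply_ne (p q : V) (χ : V → Bool) (h : q ≠ p) : bflip p χ q = χ q := by
  simp [bflip, Function.update_of_ne h]

@[simp] lemma bflip_bflip (p : V) (χ : V → Bool) : bflip p (bflip p χ) = χ := by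
  funext x
  by_cases h : x = p
  · subst h; simp [bflip]
  · simp [h]

lemma crossB_bflip_mem (χ : V → Bool) (p : V) (e : Sym2 V) (hp : p ∈ e)
    (hd : ¬ e.IsDiag) : crossB (bflip p χ) e = !(crossB χ e) := by
  obtain ⟨w, rfl⟩ := Sym2.mem_iff_exists.mp hp
  have hw : w ≠ p := fun h => hd (by simp [h])
  simp [crossB_mk, bflip, Function.update_of_ne hw]

lemma crossB_bflip_not_mem (χ : V → Bool) (p : V) (e : Sym2 V) (hp : p ∉ e) :
    crossB (bflip p χ) e = crossB χ e := by
  induction e using Sym2.inductionOn with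
  | hf a b =>
    have ha : a ≠ p := fun h => hp (by simp [h])
    have hb : b ≠ p := fun h => hp (by simp [h])
    simp [bflip_apply_ne _ _ _ ha, bflip_apply_ne _ _ _ hb]

lemma card_flip_pair (p : V) (P Q : (V → Bool) → Bool)
    (hP : ∀ χ, P (bflip p χ) = !(P χ))
    (hQ : ∀ χ, Q (bflip p χ) = Q χ) :
    2 * (univ.filter fun χ => P χ = true ∧ Q χ = true).card
      = (univ.filter fun χ => Q χ = true).card := by
  have key : (univ.filter fun χ => P χ = true ∧ Q χ = true).card
      = (univ.filter fun χ => ¬(P χ = true) ∧ Q χ = true).card := by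
    apply Finset.card_bij' (fun χ _ => bflip p χ) (fun χ _ => bflip p χ)
    · intro χ hχ
      simp only [mem_filter, mem_univ, true_and] at hχ ⊢
      simp [hP, hQ, hχ.1, hχ.2]
    · intro χ hχ
      simp only [mem_filter, mem_univ, true_and] at hχ ⊢
      have := hχ.1
      simp only [Bool.not_eq_true] at this
      simp [hP, hQ, this, hχ.2]
    · intro χ _; simp
    · intro χ _; simp
  have split := Finset.card_filter_add_card_filter_not
    (s := univ.filter fun χ => Q χ = true) (p := fun χ => P χ = true)
  rw [Finset.filter_filter, Finset.filter_filter] at split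
  have e1 : (univ.filter fun χ : V → Bool => Q χ = true ∧ P χ = true)
      = univ.filter fun χ => P χ = true ∧ Q χ = true := by
    apply Finset.filter_congr; intro χ _; rw [and_comm]
  have e2 : (univ.filter fun χ : V → Bool => Q χ = true ∧ ¬(P χ = true))
      = univ.filter fun χ => ¬(P χ = true) ∧ Q χ = true := by
    apply Finset.filter_congr; intro χ _; rw [and_comm]
  rw [e1, e2] at split
  omega

lemma card_cross_single (e : Sym2 V) (he : ¬ e.IsDiag) :
    2 * (univ.filter fun χ : V → Bool => crossB χ e = true).card = 2 ^ Fintype.card V := by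
  induction e using Sym2.inductionOn with
  | hf a b =>
    have hp : a ∈ s(a, b) := Sym2.mem_mk_left a b
    have h := card_flip_pair a (fun χ => crossB χ s(a, b)) (fun _ => true)
      (fun χ => crossB_bflip_mem χ a s(a, b) hp he) (fun _ => rfl)
    simp only [and_true] at h
    rw [h]
    simp [Finset.filter_true_of_mem, Fintype.card_fun]

lemma card_cross_pair (e f : Sym2 V) (he : ¬ e.IsDiag) (hf : ¬ f.IsDiag) (hef : e ≠ f) :
    4 * (univ.filter fun χ : V → Bool =>
      crossB χ e = true ∧ crossB χ f = true).card = 2 ^ Fintype.card V := by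
  -- find p ∈ e, p ∉ f
  obtain ⟨p, hpe, hpf⟩ : ∃ p, p ∈ e ∧ p ∉ f := by
    induction e using Sym2.inductionOn with
    | hf a b =>
      by_cases ha : a ∈ f
      · refine ⟨b, Sym2.mem_mk_right a b, fun hb => ?_⟩
        have hab : a ≠ b := by simpa using he
        exact hef ((Sym2.mem_and_mem_iff hab).mp ⟨ha, hb⟩).symm
      · exact ⟨a, Sym2.mem_mk_left a b, ha⟩
  have h := card_flip_pair p (fun χ => crossB χ e) (fun χ => crossB χ f)
    (fun χ => crossB_bflip_mem χ p e hpe he) (fun χ => crossB_bflip_not_mem χ p f hpf)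
  have h2 := card_cross_single f hf
  calc 4 * (univ.filter fun χ : V → Bool =>
        crossB χ e = true ∧ crossB χ f = true).card
      = 2 * (2 * (univ.filter fun χ : V → Bool =>
        crossB χ e = true ∧ crossB χ f = true).card) := by ring
    _ = 2 * (univ.filter fun χ : V → Bool => crossB χ f = true).card := by rw [h]
    _ = 2 ^ Fintype.card V := h2

section Sums

variable (χ : V → Bool)

noncomputable def indR (e : Sym2 V) (χ : V → Bool) : ℝ :=
  if crossB χ e = true then 1 else 0

lemma sum_indR (e : Sym2 V) (he : ¬ e.IsDiag) :
    ∑ χ : V → Bool, indR e χ = 2 ^ Fintype.card V / 2 := by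
  have h := card_cross_single e he
  have : ∑ χ : V → Bool, indR e χ
      = ((univ.filter fun χ : V → Bool => crossB χ e = true).card : ℝ) := by
    unfold indR; rw [Finset.sum_boole]
  rw [this]
  have h' : (2:ℝ) * (univ.filter fun χ : V → Bool => crossB χ e = true).card
      = 2 ^ Fintype.card V := by exact_mod_cast congrArg (Nat.cast : ℕ → ℝ) h
  linarith

lemma sum_indR_pair (e f : Sym2 V) (he : ¬ e.IsDiag) (hf : ¬ f.IsDiag) (hef : e ≠ f) :
    ∑ χ : V → Bool, indR e χ * indR f χ = 2 ^ Fintype.card V / 4 := by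
  have hmul : ∀ χ : V → Bool, indR e χ * indR f χ
      = if (crossB χ e = true ∧ crossB χ f = true) then (1:ℝ) else 0 := by
    intro χ
    unfold indR
    by_cases h1 : crossB χ e = true <;> by_cases h2 : crossB χ f = true <;> simp [h1, h2]
  simp only [hmul]
  rw [Finset.sum_boole]
  have h := card_cross_pair e f he hf hef
  have h' : (4:ℝ) * (univ.filter fun χ : V → Bool =>
      crossB χ e = true ∧ crossB χ f = true).card
      = 2 ^ Fintype.card V := by exact_mod_cast congrArg (Nat.cast : ℕ → ℝ) h
  linarith

variable (G : SimpleGraph V) [DecidableRel G.Adj]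

def cutN (χ : V → Bool) : ℕ := (G.edgeFinset.filter fun e => crossB χ e = true).card

lemma cutN_cast (χ : V → Bool) : (cutN G χ : ℝ) = ∑ e ∈ G.edgeFinset, indR e χ := by
  unfold cutN indR
  rw [Finset.sum_boole]

lemma not_isDiag_of_mem_edgeFinset {e : Sym2 V} (he : e ∈ G.edgeFinset) : ¬ e.IsDiag :=
  G.not_isDiag_of_mem_edgeSet (SimpleGraph.mem_edgeFinset.mp he)

lemma sum_cutN {mval : ℕ} (hmG : G.edgeFinset.card = mval) :
    ∑ χ : V → Bool, (cutN G χ : ℝ) = mval * (2 ^ Fintype.card V / 2) := by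
  simp only [cutN_cast]
  rw [Finset.sum_comm]
  rw [Finset.sum_congr rfl fun e he => sum_indR e (not_isDiag_of_mem_edgeFinset G he)]
  rw [Finset.sum_const, hmG, nsmul_eq_mul]

lemma sum_cutN_sq {mval : ℕ} (hmG : G.edgeFinset.card = mval) :
    ∑ χ : V → Bool, (cutN G χ : ℝ) ^ 2
      = mval * (2 ^ Fintype.card V / 2) + (mval * (mval - 1)) * (2 ^ Fintype.card V / 4) := by
  have expand : ∀ χ : V → Bool, (cutN G χ : ℝ) ^ 2
      = ∑ e ∈ G.edgeFinset, ∑ f ∈ G.edgeFinset, indR e χ * indR f χ := by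
    intro χ
    rw [cutN_cast, sq, Finset.sum_mul_sum]
  simp only [expand]
  rw [Finset.sum_comm]
  have inner : ∀ e ∈ G.edgeFinset,
      ∑ χ : V → Bool, ∑ f ∈ G.edgeFinset, indR e χ * indR f χ
      = 2 ^ Fintype.card V / 2 + (mval - 1) * (2 ^ Fintype.card V / 4) := by
    intro e he
    rw [Finset.sum_comm]
    rw [← Finset.add_sum_erase _ _ he]
    have h1 : ∑ χ : V → Bool, indR e χ * indR e χ = 2 ^ Fintype.card V / 2 := by
      have : ∀ χ : V → Bool, indR e χ * indR e χ = indR e χ := by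
        intro χ; unfold indR; by_cases h : crossB χ e = true <;> simp [h]
      simp only [this]
      exact sum_indR e (not_isDiag_of_mem_edgeFinset G he)
    have h2 : ∀ f ∈ G.edgeFinset.erase e,
        ∑ χ : V → Bool, indR e χ * indR f χ = 2 ^ Fintype.card V / 4 := by
      intro f hf
      exact sum_indR_pair e f (not_isDiag_of_mem_edgeFinset G he)
        (not_isDiag_of_mem_edgeFinset G (Finset.mem_of_mem_erase hf))
        (Ne.symm (Finset.ne_of_mem_erase hf))
    rw [h1, Finset.sum_congr rfl h2, Finset.sum_const,
      Finset.card_erase_of_mem he, hmG, nsmul_eq_mul]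
    have hm1 : 1 ≤ mval := by
      rw [← hmG]; exact Finset.card_pos.mpr ⟨e, he⟩
    push_cast [hm1]
    ring
  rw [Finset.sum_congr rfl inner, Finset.sum_const, hmG, nsmul_eq_mul]
  ring

lemma sum_cutN_dev {mval : ℕ} (hmG : G.edgeFinset.card = mval) :
    ∑ χ : V → Bool, ((cutN G χ : ℝ) - mval / 2) ^ 2 = (mval : ℝ) * (2 ^ Fintype.card V / 4) := by
  have expand : ∀ χ : V → Bool, ((cutN G χ : ℝ) - mval / 2) ^ 2
      = (cutN G χ : ℝ) ^ 2 - mval * (cutN G χ : ℝ) + (mval:ℝ)^2 / 4 := by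
    intro χ; ring
  simp only [expand]
  rw [Finset.sum_add_distrib, Finset.sum_sub_distrib, ← Finset.mul_sum,
    sum_cutN G hmG, sum_cutN_sq G hmG, Finset.sum_const, nsmul_eq_mul]
  have : (Finset.univ (α := V → Bool)).card = 2 ^ Fintype.card V := by
    simp [Fintype.card_fun]
  rw [Finset.card_univ, Fintype.card_fun, Fintype.card_bool]
  push_cast
  ring

end Sums

lemma card_bad_le (G : SimpleGraph V) [DecidableRel G.Adj] (ℓ mval : ℕ) (hℓ : 0 < ℓ)
    (hmG : G.edgeFinset.card = mval) :
    ((univ.filter fun χ : V → Bool =>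
      (cutN G χ : ℝ) < mval / 2 - Real.sqrt (ℓ * mval / 2)).card : ℝ)
      ≤ 2 ^ Fintype.card V / (2 * ℓ) := by
  rcases Nat.eq_zero_or_pos mval with h0 | hpos
  · subst h0
    have : (univ.filter fun χ : V → Bool =>
        (cutN G χ : ℝ) < (0:ℕ) / 2 - Real.sqrt (ℓ * (0:ℕ) / 2)) = ∅ := by
      apply Finset.filter_eq_empty_iff.mpr
      intro χ _
      push_neg
      have : Real.sqrt ((ℓ:ℝ) * (0:ℕ) / 2) = 0 := by norm_num
      rw [this]
      norm_num
    rw [this]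
    simp
    positivity
  · set t := Real.sqrt ((ℓ:ℝ) * mval / 2) with ht
    have htnn : (0:ℝ) ≤ t := Real.sqrt_nonneg _
    have ht2 : t ^ 2 = (ℓ:ℝ) * mval / 2 := Real.sq_sqrt (by positivity)
    set Bad := univ.filter fun χ : V → Bool => (cutN G χ : ℝ) < mval / 2 - t with hBad
    have h1 : (Bad.card : ℝ) * t ^ 2 ≤ ∑ χ : V → Bool, ((cutN G χ : ℝ) - mval / 2) ^ 2 := by
      calc (Bad.card : ℝ) * t ^ 2 = ∑ _χ ∈ Bad, t ^ 2 := by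
            rw [Finset.sum_const, nsmul_eq_mul]
        _ ≤ ∑ χ ∈ Bad, ((cutN G χ : ℝ) - mval / 2) ^ 2 := by
            apply Finset.sum_le_sum
            intro χ hχ
            rw [hBad, Finset.mem_filter] at hχ
            nlinarith [hχ.2]
        _ ≤ ∑ χ : V → Bool, ((cutN G χ : ℝ) - mval / 2) ^ 2 :=
            Finset.sum_le_sum_of_subset_of_nonneg (Finset.subset_univ _)
              (fun _ _ _ => sq_nonneg _)
    rw [sum_cutN_dev G hmG, ht2] at h1
    have hl : (0:ℝ) < ℓ := by exact_mod_cast hℓ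
    have hmp : (0:ℝ) < mval := by exact_mod_cast hpos
    have hN : (0:ℝ) < 2 ^ Fintype.card V := by positivity
    rw [le_div_iff₀ (by positivity)]
    have hc : (0:ℝ) ≤ (Bad.card : ℝ) := Nat.cast_nonneg _
    nlinarith [h1]

lemma eBetween_eq_cutN (G : SimpleGraph V) [DecidableRel G.Adj] (χ : V → Bool) :
    eBetween G (univ.filter fun v => χ v = true)
      (univ.filter fun v => χ v = true)ᶜ = cutN G χ := by
  unfold eBetween cutN
  congr 1
  apply Finset.filter_congr
  intro e _
  induction e using Sym2.inductionOn with
  | hf u v =>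
    simp only [Finset.mem_compl, Finset.mem_filter, Finset.mem_univ, true_and,
      Bool.not_eq_true, crossB_mk, eq_iff_iff]
    constructor
    · rintro ⟨a, ha, b, hb, hab⟩
      have h2 : crossB χ s(u, v) = crossB χ s(a, b) := by rw [hab]
      rw [crossB_mk, crossB_mk, ha, hb] at h2
      simpa using h2
    · intro h
      cases hu : χ u with
      | true =>
        have hv : χ v = false := by
          cases hv : χ v
          · rfl
          · rw [hu, hv] at h; simp at h
        exact ⟨u, hu, v, hv, rfl⟩
      | false =>
        have hv : χ v = true := by
          cases hv : χ v
          · rw [hu, hv] at h; simp at h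
          · rfl
        exact ⟨v, hv, u, hu, Sym2.eq_swap⟩

end SimulBipartAux

open Finset SimulBipartAux in
/-- Given graphs `G 1, …, G ℓ` on the same finite vertex set `V`, where `G i` has
`m i` edges, there is a bipartition of `V` into classes `A` and `B` such that for
every `i`, the number of edges of `G i` between `A` and `B` is at least
`m i / 2 - √(ℓ * m i / 2)`. -/
theorem simultaneous_bipartition {V : Type*} [Fintype V] [DecidableEq V] (ℓ : ℕ)
    (G : Fin ℓ → SimpleGraph V) [∀ i, DecidableRel (G i).Adj]
    (m : Fin ℓ → ℕ) (hm : ∀ i, (G i).edgeFinset.card = m i) :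
    ∃ A B : Finset V, Disjoint A B ∧ A ∪ B = Finset.univ ∧
      ∀ i, (eBetween (G i) A B : ℝ) ≥ (m i : ℝ) / 2 - Real.sqrt (ℓ * m i / 2) := by
  have main : ∃ χ : V → Bool,
      ∀ i, (cutN (G i) χ : ℝ) ≥ (m i : ℝ) / 2 - Real.sqrt (ℓ * m i / 2) := by
    rcases Nat.eq_zero_or_pos ℓ with hl0 | hlpos
    · subst hl0
      exact ⟨fun _ => true, fun i => i.elim0⟩
    · by_contra hcon
      push_neg at hcon
      set Bad : Fin ℓ → Finset (V → Bool) := fun i =>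
        univ.filter fun χ => (cutN (G i) χ : ℝ) < (m i : ℝ) / 2 - Real.sqrt (ℓ * m i / 2)
        with hBad
      have hsub : (univ : Finset (V → Bool)) ⊆ univ.biUnion Bad := by
        intro χ _
        obtain ⟨i, hi⟩ := hcon χ
        exact Finset.mem_biUnion.mpr ⟨i, Finset.mem_univ i,
          Finset.mem_filter.mpr ⟨Finset.mem_univ χ, hi⟩⟩
      have hcard : (2 : ℕ) ^ Fintype.card V ≤ ∑ i : Fin ℓ, (Bad i).card := by
        calc (2:ℕ) ^ Fintype.card V = (univ : Finset (V → Bool)).card := by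
              rw [Finset.card_univ, Fintype.card_fun, Fintype.card_bool]
          _ ≤ (univ.biUnion Bad).card := Finset.card_le_card hsub
          _ ≤ ∑ i : Fin ℓ, (Bad i).card := Finset.card_biUnion_le
      have hcardR : ((2:ℝ)) ^ Fintype.card V ≤ ∑ i : Fin ℓ, ((Bad i).card : ℝ) := by
        exact_mod_cast hcard
      have hboundR : ∑ i : Fin ℓ, ((Bad i).card : ℝ)
          ≤ ∑ _i : Fin ℓ, (2:ℝ) ^ Fintype.card V / (2 * ℓ) := by
        apply Finset.sum_le_sum
        intro i _
        exact card_bad_le (G i) ℓ (m i) hlpos (hm i)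
      rw [Finset.sum_const, Finset.card_univ, Fintype.card_fin, nsmul_eq_mul] at hboundR
      have hl : (0:ℝ) < ℓ := by exact_mod_cast hlpos
      have hN : (0:ℝ) < 2 ^ Fintype.card V := by positivity
      have : (ℓ:ℝ) * ((2:ℝ) ^ Fintype.card V / (2 * ℓ)) = 2 ^ Fintype.card V / 2 := by
        field_simp
      rw [this] at hboundR
      linarith
  obtain ⟨χ, hχ⟩ := main
  refine ⟨univ.filter fun v => χ v = true, (univ.filter fun v => χ v = true)ᶜ,
    disjoint_compl_right, Finset.union_compl _, ?_⟩
  intro i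
  rw [eBetween_eq_cutN]
  exact hχ i
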